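/- Let A ∈ ℝ_+^{n×n}, c ∈ ℝ^n with c > 0 entrywise, and define the feasible set F = { l ∈ ℝ^n : l ≥ 0, A - l cᵀ ≥ 0 }. Let η > 0 satisfy η ≤ ‖l̂‖₂ where l̂_i = min_j a_{ij}/c_j, and suppose l̂ ∈ F. Then min{ ‖A - l cᵀ‖ : l ∈ F, ‖l‖₂ = η } = min{ ‖A - l cᵀ‖ : l ∈ F, ‖l‖₂ ≤ η }, where ‖·‖ is the spectral norm (assuming both minima exist). -/

import Mathlib

noncomputable def specNorm {m n : ℕ} (M : Matrix (Fin m) (Fin n) ℝ) : ℝ :=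
  ‖LinearMap.toContinuousLinearMap (Matrix.toEuclideanLin M)‖

lemma specNorm_mono {n : ℕ} (B C : Matrix (Fin n) (Fin n) ℝ)
    (hB : ∀ i j, 0 ≤ B i j) (hBC : ∀ i j, B i j ≤ C i j) :
    specNorm B ≤ specNorm C := by
  unfold specNorm
  apply ContinuousLinearMap.opNorm_le_bound _ (norm_nonneg _)
  intro x
  set y : EuclideanSpace ℝ (Fin n) := WithLp.toLp 2 (fun i => |x i|) with hy
  have hxy : ‖y‖ = ‖x‖ := by
    simp [EuclideanSpace.norm_eq, hy]
  have key : ‖(Matrix.toEuclideanLin B).toContinuousLinearMap x‖ ≤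
      ‖(Matrix.toEuclideanLin C).toContinuousLinearMap y‖ := by
    simp only [LinearMap.coe_toContinuousLinearMap']
    rw [EuclideanSpace.norm_eq, EuclideanSpace.norm_eq]
    apply Real.sqrt_le_sqrt
    apply Finset.sum_le_sum
    intro i _
    have h1 : (Matrix.toEuclideanLin B x) i = ∑ j, B i j * x j := by
      simp [Matrix.toEuclideanLin_apply, Matrix.mulVec, dotProduct]
    have h2 : (Matrix.toEuclideanLin C y) i = ∑ j, C i j * |x j| := by
      simp [Matrix.toEuclideanLin_apply, Matrix.mulVec, dotProduct, hy]
    rw [Real.norm_eq_abs, Real.norm_eq_abs, sq_abs, sq_abs]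
    have hle : |(Matrix.toEuclideanLin B x) i| ≤ (Matrix.toEuclideanLin C y) i := by
      rw [h1, h2]
      calc |∑ j, B i j * x j| ≤ ∑ j, |B i j * x j| := Finset.abs_sum_le_sum_abs _ _
        _ ≤ ∑ j, C i j * |x j| := by
            apply Finset.sum_le_sum
            intro j _
            rw [abs_mul, abs_of_nonneg (hB i j)]
            exact mul_le_mul_of_nonneg_right (hBC i j) (abs_nonneg _)
    calc (Matrix.toEuclideanLin B x) i ^ 2 = |(Matrix.toEuclideanLin B x) i| ^ 2 := by
          rw [sq_abs]
      _ ≤ (Matrix.toEuclideanLin C y) i ^ 2 := by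
          apply sq_le_sq' _ hle
          linarith [abs_nonneg ((Matrix.toEuclideanLin B x) i)]
  calc ‖(Matrix.toEuclideanLin B).toContinuousLinearMap x‖
      ≤ ‖(Matrix.toEuclideanLin C).toContinuousLinearMap y‖ := key
    _ ≤ ‖(Matrix.toEuclideanLin C).toContinuousLinearMap‖ * ‖y‖ :=
        ContinuousLinearMap.le_opNorm _ _
    _ = ‖(Matrix.toEuclideanLin C).toContinuousLinearMap‖ * ‖x‖ := by rw [hxy]

/-- The minimum of ‖A - l cᵀ‖ over the feasible set with ‖l‖ = η equals the minimum with
‖l‖ ≤ η (Lemma on scaling, single output case). -/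
theorem min_eq_min {n : ℕ} [NeZero n]
    (A : Matrix (Fin n) (Fin n) ℝ) (hA : ∀ i j, 0 ≤ A i j)
    (c : Fin n → ℝ) (hc : ∀ j, 0 < c j) (η : ℝ) (hη : 0 < η)
    (lhat : EuclideanSpace ℝ (Fin n))
    (hlhat : ∀ i, lhat i = Finset.univ.inf' Finset.univ_nonempty (fun j => A i j / c j))
    (hηle : η ≤ ‖lhat‖)
    (hfeas : (∀ i, 0 ≤ lhat i) ∧ (∀ i j, 0 ≤ A i j - lhat i * c j))
    (m₁ m₂ : ℝ)
    (h1 : IsLeast {x : ℝ | ∃ l : EuclideanSpace ℝ (Fin n), (∀ i, 0 ≤ l i)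
        ∧ (∀ i j, 0 ≤ A i j - l i * c j) ∧ ‖l‖ = η
        ∧ x = specNorm (Matrix.of fun i j => A i j - l i * c j)} m₁)
    (h2 : IsLeast {x : ℝ | ∃ l : EuclideanSpace ℝ (Fin n), (∀ i, 0 ≤ l i)
        ∧ (∀ i j, 0 ≤ A i j - l i * c j) ∧ ‖l‖ ≤ η
        ∧ x = specNorm (Matrix.of fun i j => A i j - l i * c j)} m₂) :
    m₁ = m₂ := by
  have hm21 : m₂ ≤ m₁ := by
    apply h2.2
    obtain ⟨l, hl0, hl2, hlη, hx⟩ := h1.1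
    exact ⟨l, hl0, hl2, le_of_eq hlη, hx⟩
  have hm12 : m₁ ≤ m₂ := by
    obtain ⟨l, hl0, hl2, hlη, hx⟩ := h2.1
    -- l ≤ lhat entrywise
    have hlle : ∀ i, l i ≤ lhat i := by
      intro i
      rw [hlhat i]
      apply Finset.le_inf'
      intro j _
      rw [le_div_iff₀ (hc j)]
      linarith [hl2 i j]
    -- IVT to get α with ‖α • lhat + (1-α) • l‖ = η
    set f : ℝ → ℝ := fun α => ‖(α • lhat + (1 - α) • l : EuclideanSpace ℝ (Fin n))‖ with hf
    have hcont : Continuous f := by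
      apply Continuous.norm
      exact (continuous_id.smul continuous_const).add
        ((continuous_const.sub continuous_id).smul continuous_const)
    have hf0 : f 0 = ‖l‖ := by simp [hf]
    have hf1 : f 1 = ‖lhat‖ := by simp [hf]
    have hmem : η ∈ Set.Icc (f 0) (f 1) := by
      rw [hf0, hf1]; exact ⟨hlη, hηle⟩
    obtain ⟨α, hα, hfα⟩ := intermediate_value_Icc zero_le_one hcont.continuousOn hmem
    set l₁ : EuclideanSpace ℝ (Fin n) := α • lhat + (1 - α) • l with hl₁
    have hl₁i : ∀ i, l₁ i = α * lhat i + (1 - α) * l i := by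
      intro i; rfl
    have hl₁ge : ∀ i, l i ≤ l₁ i := by
      intro i
      rw [hl₁i i]
      nlinarith [hlle i, hα.1, hα.2]
    have hl₁0 : ∀ i, 0 ≤ l₁ i := fun i => le_trans (hl0 i) (hl₁ge i)
    have hl₁2 : ∀ i j, 0 ≤ A i j - l₁ i * c j := by
      intro i j
      rw [hl₁i i]
      nlinarith [hfeas.2 i j, hl2 i j, hα.1, hα.2]
    have hmono : specNorm (Matrix.of fun i j => A i j - l₁ i * c j)
        ≤ specNorm (Matrix.of fun i j => A i j - l i * c j) := by
      apply specNorm_mono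
      · intro i j; exact hl₁2 i j
      · intro i j
        simp only [Matrix.of_apply]
        have := mul_le_mul_of_nonneg_right (hl₁ge i) (hc j).le
        linarith
    have : m₁ ≤ specNorm (Matrix.of fun i j => A i j - l₁ i * c j) :=
      h1.2 ⟨l₁, hl₁0, hl₁2, hfα, rfl⟩
    linarith [hx ▸ hmono]
  linarith
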